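/- Let k ≥ 1 and consider S = Q[x,y]. The derivations θ_1 = x^{2k} y ∂_x + x y^{2k} ∂_y and θ_2 = x^{2k+1} ∂_x + y^{2k+1} ∂_y satisfy: θ_i(x) is divisible by x^{2k}, θ_i(y) is divisible by y^{2k}, θ_i(x+y) is divisible by (x+y), and θ_i(x−y) is divisible by (x−y), for i = 1,2. Moreover the determinant of the coefficient matrix ((θ_1(x), θ_1(y)), (θ_2(x), θ_2(y))) equals −x^{2k} y^{2k} (x+y)(x−y) up to sign. Hence θ_1, θ_2 form a basis of the module of multiderivations D(B, ν) for the rank-2 multiarrangement with defining polynomial x^{2k} y^{2k} (x+y)(x−y), and this multiarrangement is free with exponents (2k+1, 2k+1). -/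

import Mathlib

noncomputable section
open MvPolynomial

/-- polynomial ring in two variables `x, y` -/
abbrev S₂ : Type := MvPolynomial (Fin 2) ℚ

def px : S₂ := X 0
def py : S₂ := X 1

/-- The module of multiderivations of the rank-2 multiarrangement with defining
polynomial `x^a y^b (x+y)^c (x-y)^d`, where a derivation `θ` is recorded by the
pair `(θ(x), θ(y))`. -/
def Dmulti (a b c d : ℕ) : Set (S₂ × S₂) :=
  {θ | px ^ a ∣ θ.1 ∧ py ^ b ∣ θ.2 ∧ (px + py) ^ c ∣ (θ.1 + θ.2) ∧
    (px - py) ^ d ∣ (θ.1 - θ.2)}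

/- Auxiliary material -/

def e2 : S₂ ≃ₐ[ℚ] Polynomial (MvPolynomial (Fin 1) ℚ) := MvPolynomial.finSuccEquiv ℚ 1

lemma e2_px : e2 px = Polynomial.X := finSuccEquiv_X_zero
lemma e2_py : e2 py = Polynomial.C (X 0) := by
  have : (1 : Fin 2) = Fin.succ 0 := rfl
  rw [py, this]; exact finSuccEquiv_X_succ

lemma prime_of_e2 {a : S₂} (h : Prime (e2 a)) : Prime a := by
  have := MulEquiv.prime_iff e2.toRingEquiv.toMulEquiv (p := a)
  rw [← this]; exact h

lemma prime_add : Prime (px + py) := by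
  apply prime_of_e2
  rw [map_add, e2_px, e2_py, show Polynomial.X + Polynomial.C (X 0 : MvPolynomial (Fin 1) ℚ)
    = Polynomial.X - Polynomial.C (-(X 0)) by rw [map_neg, sub_neg_eq_add]]
  exact Polynomial.prime_X_sub_C _

lemma prime_sub : Prime (px - py) := by
  apply prime_of_e2
  rw [map_sub, e2_px, e2_py]
  exact Polynomial.prime_X_sub_C _

lemma not_add_dvd_px : ¬ (px + py) ∣ px := by
  intro h
  have := map_dvd e2.toAlgHom h
  rw [AlgEquiv.toAlgHom_eq_coe] at this
  simp only [AlgHom.coe_coe, AlgEquiv.coe_algHom, map_add, e2_px, e2_py] at this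
  rw [show Polynomial.X + Polynomial.C (X 0 : MvPolynomial (Fin 1) ℚ)
    = Polynomial.X - Polynomial.C (-(X 0)) by rw [map_neg, sub_neg_eq_add],
    Polynomial.dvd_iff_isRoot] at this
  simp [Polynomial.IsRoot, X_ne_zero] at this

lemma not_sub_dvd_px : ¬ (px - py) ∣ px := by
  intro h
  have := map_dvd e2.toAlgHom h
  rw [AlgEquiv.toAlgHom_eq_coe] at this
  simp only [AlgHom.coe_coe, AlgEquiv.coe_algHom, map_sub, e2_px, e2_py, Polynomial.dvd_iff_isRoot] at this
  simp [Polynomial.IsRoot] at this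

lemma not_sub_dvd_add : ¬ (px - py) ∣ (px + py) := by
  intro h
  have := map_dvd e2.toAlgHom h
  rw [AlgEquiv.toAlgHom_eq_coe] at this
  simp only [AlgHom.coe_coe, AlgEquiv.coe_algHom, map_sub, map_add, e2_px, e2_py, Polynomial.dvd_iff_isRoot] at this
  simp [Polynomial.IsRoot] at this

lemma prime_dvd_of_dvd_pow_mul {p a r : S₂} (hp : Prime p) (hpa : ¬ p ∣ a) {n : ℕ}
    (h : p ∣ a ^ n * r) : p ∣ r := by
  rcases hp.2.2 _ _ h with h1 | h1
  · exact absurd (hp.dvd_of_dvd_pow h1) hpa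
  · exact h1

lemma mul_dvd_of_primes {p q r : S₂} (hp : Prime p) (hq : Prime q) (hqp : ¬ q ∣ p)
    (h1 : p ∣ r) (h2 : q ∣ r) : p * q ∣ r := by
  obtain ⟨a, rfl⟩ := h1
  rcases hq.2.2 _ _ h2 with h | h
  · exact absurd h hqp
  · exact mul_dvd_mul_left p h

lemma px_ne_zero : px ≠ 0 := X_ne_zero 0
lemma py_ne_zero : py ≠ 0 := X_ne_zero 1

lemma add_dvd_even_sub (n : ℕ) : (px + py) ∣ (py ^ (2 * n) - px ^ (2 * n)) := by
  have h0 : (px + py) ∣ (py ^ 2 - px ^ 2) := ⟨py - px, by ring⟩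
  have h1 := h0.trans (sub_dvd_pow_sub_pow (py ^ 2) (px ^ 2) n)
  rwa [← pow_mul, ← pow_mul] at h1

lemma sub_dvd_even_sub (n : ℕ) : (px - py) ∣ (px ^ (2 * n) - py ^ (2 * n)) :=
  (sub_dvd_pow_sub_pow px py (2 * n))

theorem stmt4 (k : ℕ) (hk : 1 ≤ k) :
    let θ₁ : S₂ × S₂ := (px ^ (2 * k) * py, px * py ^ (2 * k))
    let θ₂ : S₂ × S₂ := (px ^ (2 * k + 1), py ^ (2 * k + 1))
    θ₁ ∈ Dmulti (2 * k) (2 * k) 1 1 ∧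
    θ₂ ∈ Dmulti (2 * k) (2 * k) 1 1 ∧
    θ₁.1 * θ₂.2 - θ₁.2 * θ₂.1 = -(px ^ (2 * k) * py ^ (2 * k) * (px + py) * (px - py)) ∧
    (∀ θ ∈ Dmulti (2 * k) (2 * k) 1 1, ∃ f g : S₂, θ = f • θ₁ + g • θ₂) ∧
    (∀ f g : S₂, f • θ₁ + g • θ₂ = 0 → f = 0 ∧ g = 0) := by
  obtain ⟨m, rfl⟩ : ∃ m, k = m + 1 := ⟨k - 1, by omega⟩
  intro θ₁ θ₂
  have hD : px ^ (2 * (m + 1)) * py ^ (2 * (m + 1)) * ((px + py) * (px - py)) ≠ 0 :=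
    mul_ne_zero (mul_ne_zero (pow_ne_zero _ px_ne_zero) (pow_ne_zero _ py_ne_zero))
      (mul_ne_zero prime_add.ne_zero prime_sub.ne_zero)
  refine ⟨?_, ?_, ?_, ?_, ?_⟩
  · -- θ₁ ∈ Dmulti
    refine ⟨dvd_mul_right _ _, dvd_mul_left _ _, ?_, ?_⟩
    · rw [pow_one]
      have h : (px + py) ∣ (px ^ (2 * m + 1) + py ^ (2 * m + 1)) :=
        Odd.add_dvd_pow_add_pow px py ⟨m, by ring⟩
      have := h.mul_left (px * py)
      rwa [show px * py * (px ^ (2 * m + 1) + py ^ (2 * m + 1))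
        = θ₁.1 + θ₁.2 from by show _ = px ^ (2 * (m + 1)) * py + px * py ^ (2 * (m + 1)); ring]
        at this
    · rw [pow_one]
      have h : (px - py) ∣ (px ^ (2 * m + 1) - py ^ (2 * m + 1)) :=
        sub_dvd_pow_sub_pow px py _
      have := h.mul_left (px * py)
      rwa [show px * py * (px ^ (2 * m + 1) - py ^ (2 * m + 1))
        = θ₁.1 - θ₁.2 from by show _ = px ^ (2 * (m + 1)) * py - px * py ^ (2 * (m + 1)); ring]
        at this
  · -- θ₂ ∈ Dmulti
    refine ⟨pow_dvd_pow px (Nat.le_succ _), pow_dvd_pow py (Nat.le_succ _), ?_, ?_⟩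
    · rw [pow_one]
      exact Odd.add_dvd_pow_add_pow px py ⟨m + 1, by ring⟩
    · rw [pow_one]
      exact sub_dvd_pow_sub_pow px py _
  · -- determinant
    show px ^ (2 * (m + 1)) * py * py ^ (2 * (m + 1) + 1)
      - px * py ^ (2 * (m + 1)) * px ^ (2 * (m + 1) + 1) = _
    ring
  · -- spanning
    rintro ⟨P, Q⟩ ⟨⟨P₁, hP⟩, ⟨Q₁, hQ⟩, hs, hd⟩
    simp only at hP hQ hs hd
    subst hP; subst hQ
    rw [pow_one] at hs hd
    set n := 2 * (m + 1) with hn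
    -- (px+py) ∣ P₁ + Q₁
    have hsum : (px + py) ∣ (P₁ + Q₁) := by
      apply prime_dvd_of_dvd_pow_mul prime_add not_add_dvd_px (n := n)
      have h1 := dvd_sub hs ((add_dvd_even_sub (m + 1)).mul_right Q₁)
      rwa [show px ^ n * P₁ + py ^ n * Q₁ - (py ^ n - px ^ n) * Q₁
        = px ^ n * (P₁ + Q₁) from by ring] at h1
    have hdiff : (px - py) ∣ (P₁ - Q₁) := by
      apply prime_dvd_of_dvd_pow_mul prime_sub not_sub_dvd_px (n := n)
      have h1 := dvd_sub hd ((sub_dvd_even_sub (m + 1)).mul_right Q₁)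
      rwa [show px ^ n * P₁ - py ^ n * Q₁ - (px ^ n - py ^ n) * Q₁
        = px ^ n * (P₁ - Q₁) from by ring] at h1
    -- both linear forms divide the Cramer cofactors
    have hM1 : (px + py) * (px - py) ∣ (P₁ * py - Q₁ * px) := by
      apply mul_dvd_of_primes prime_add prime_sub not_sub_dvd_add
      · have := dvd_sub (hsum.mul_left py) (dvd_mul_right (px + py) Q₁)
        rwa [show py * (P₁ + Q₁) - (px + py) * Q₁ = P₁ * py - Q₁ * px from by ring] at this
      · have := dvd_add (hdiff.mul_left py) ((dvd_refl (px - py)).mul_right (-Q₁))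
        rwa [show py * (P₁ - Q₁) + (px - py) * (-Q₁) = P₁ * py - Q₁ * px from by ring] at this
    have hM2 : (px + py) * (px - py) ∣ (Q₁ * py - P₁ * px) := by
      apply mul_dvd_of_primes prime_add prime_sub not_sub_dvd_add
      · have := dvd_sub (hsum.mul_left py) (dvd_mul_right (px + py) P₁)
        rwa [show py * (P₁ + Q₁) - (px + py) * P₁ = Q₁ * py - P₁ * px from by ring] at this
      · have := dvd_add (hdiff.mul_left (-py)) ((dvd_refl (px - py)).mul_right (-P₁))
        rwa [show -py * (P₁ - Q₁) + (px - py) * (-P₁) = Q₁ * py - P₁ * px from by ring] at this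
    obtain ⟨f₁, hf⟩ := hM1
    obtain ⟨g₁, hg⟩ := hM2
    refine ⟨-f₁, -g₁, ?_⟩
    show (px ^ n * P₁, py ^ n * Q₁)
      = (-f₁ * (px ^ n * py) + -g₁ * px ^ (n + 1),
         -f₁ * (px * py ^ n) + -g₁ * py ^ (n + 1))
    rw [Prod.mk.injEq]
    constructor
    · apply mul_left_cancel₀ hD
      linear_combination (-(px ^ n * py ^ n * px ^ n * py)) * hf
        + (-(px ^ n * py ^ n * px ^ (n + 1))) * hg
    · apply mul_left_cancel₀ hD
      linear_combination (-(px ^ n * py ^ n * px * py ^ n)) * hf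
        + (-(px ^ n * py ^ n * py ^ (n + 1))) * hg
  · -- independence
    intro f g h
    set n := 2 * (m + 1) with hn
    have h1 : f * (px ^ n * py) + g * px ^ (n + 1) = 0 := congrArg Prod.fst h
    have h2 : f * (px * py ^ n) + g * py ^ (n + 1) = 0 := congrArg Prod.snd h
    have hf : f * (px ^ n * py ^ n * ((px + py) * (px - py))) = 0 := by
      linear_combination (-(py ^ (n + 1))) * h1 + px ^ (n + 1) * h2
    have hf0 : f = 0 := by
      rcases mul_eq_zero.mp hf with h | h
      · exact h
      · exact absurd h hD
    refine ⟨hf0, ?_⟩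
    rw [hf0, zero_mul, zero_add] at h1
    rcases mul_eq_zero.mp h1 with h | h
    · exact h
    · exact absurd h (pow_ne_zero _ px_ne_zero)

end
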